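/- Let a₁ < a₂ < a₃ < a₄ < a₅ be integers. For i = 1, …, 4, let v_i be (−1)^i times the determinant of the 3×3 matrix obtained from the 4×3 matrix (a_j^k)_{1≤j≤4, 0≤k≤2} by deleting the j = i row; for i = 1, …, 4, let ṽ_{i+1} be (−1)^i times the determinant of the 3×3 matrix obtained from the 4×3 matrix (a_{j+1}^k)_{1≤j≤4, 0≤k≤2} by deleting the j = i row. Then for every ε > 0 there exists L₀ such that for every integer L ≥ L₀ there exists a set Λ ⊆ {0, 1, …, L−1} with |Λ| > L^{1−ε} such that the only b₁, …, b₅ ∈ Λ satisfying both v₁b₁ + v₂b₂ + v₃b₃ + v₄b₄ = 0 and ṽ₂b₂ + ṽ₃b₃ + ṽ₄b₄ + ṽ₅b₅ = 0 satisfy b₁ = b₂ = b₃ = b₄ = b₅. -/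

import Mathlib

/-- uniqueness of bounded base-d representations -/
lemma ruzsa_digits_zero {d : ℤ} : ∀ (n : ℕ) (c : Fin n → ℤ),
    (∀ j, 2 * |c j| < d) → (∑ j, c j * d ^ (j : ℕ)) = 0 → ∀ j, c j = 0 := by
  intro n
  induction n with
  | zero => intro c _ _ j; exact j.elim0
  | succ n ih =>
    intro c hc h j
    rw [Fin.sum_univ_succ] at h
    have hre : ∑ j : Fin n, c j.succ * d ^ ((j.succ : Fin (n+1)) : ℕ)
        = d * ∑ j : Fin n, c j.succ * d ^ (j : ℕ) := by
      rw [Finset.mul_sum]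
      refine Finset.sum_congr rfl fun j _ => ?_
      rw [Fin.val_succ, pow_succ]
      ring
    rw [hre] at h
    have hd : (0:ℤ) ≤ 2 * |c 0| := by positivity
    have hdvd : d ∣ c 0 := by
      refine ⟨-(∑ j : Fin n, c j.succ * d ^ (j : ℕ)), ?_⟩
      simp at h
      linarith
    have h0 : c 0 = 0 := Int.eq_zero_of_abs_lt_dvd hdvd (by have := hc 0; linarith)
    have hS : ∑ j : Fin n, c j.succ * d ^ (j : ℕ) = 0 := by
      have hdpos : 0 < d := lt_of_le_of_lt hd (hc 0)
      simp [h0] at h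
      exact h.resolve_left (by omega)
    have := ih (fun j => c j.succ) (fun j => hc j.succ) hS
    rcases Fin.eq_zero_or_eq_succ j with rfl | ⟨k, rfl⟩
    · exact h0
    · exact this k

lemma ruzsa_vdm_inj {k : ℕ} (A : Fin k → ℚ) (hA : Function.Injective A)
    (c : Fin k → ℚ) (h : ∀ i, ∑ t : Fin k, A i ^ (t : ℕ) * c t = 0) :
    ∀ t, c t = 0 := by
  have hdet : (Matrix.vandermonde A).det ≠ 0 :=
    Matrix.det_vandermonde_ne_zero_iff.mpr hA
  have hz : (Matrix.vandermonde A).mulVec c = 0 := by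
    funext i
    simpa [Matrix.mulVec, dotProduct, Matrix.vandermonde] using h i
  have := Matrix.eq_zero_of_mulVec_eq_zero hdet hz
  exact fun t => congrFun this t

lemma ruzsa_vdm_surj {k : ℕ} (A : Fin k → ℚ) (hA : Function.Injective A)
    (w : Fin k → ℚ) : ∃ c : Fin k → ℚ, ∀ i, ∑ t : Fin k, A i ^ (t : ℕ) * c t = w i := by
  have hdet : (Matrix.vandermonde A).det ≠ 0 :=
    Matrix.det_vandermonde_ne_zero_iff.mpr hA
  have hsurj : Function.Surjective (Matrix.vandermonde A).mulVec :=
    Matrix.mulVec_surjective_iff_isUnit.mpr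
      ((Matrix.isUnit_iff_isUnit_det _).mpr (isUnit_iff_ne_zero.mpr hdet))
  obtain ⟨c, hc⟩ := hsurj w
  refine ⟨c, fun i => ?_⟩
  have := congrFun hc i
  simpa [Matrix.mulVec, dotProduct, Matrix.vandermonde] using this

lemma ruzsa_minor_explicit (f : Fin 4 → ℤ) (v : Fin 4 → ℤ)
    (hv : ∀ i : Fin 4, v i = (-1) ^ ((i : ℕ) + 1) *
      (Matrix.of fun (j k : Fin 3) => f (i.succAbove j) ^ (k : ℕ)).det) :
    v 0 = -((f 2 - f 1) * (f 3 - f 1) * (f 3 - f 2)) ∧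
    v 1 = (f 2 - f 0) * (f 3 - f 0) * (f 3 - f 2) ∧
    v 2 = -((f 1 - f 0) * (f 3 - f 0) * (f 3 - f 1)) ∧
    v 3 = (f 1 - f 0) * (f 2 - f 0) * (f 2 - f 1) := by
  have h0 := hv 0; have h1 := hv 1; have h2 := hv 2; have h3 := hv 3
  rw [show ∀ x : Fin 4, Fin.succAbove x = fun j => if Fin.castSucc j < x then Fin.castSucc j else Fin.succ j from fun _ => rfl] at h0 h1 h2 h3
  simp only [Matrix.det_fin_three, Matrix.of_apply,
    show ((0:Fin 4) < (0:Fin 4)) ↔ False by decide,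
    show ((1:Fin 4) < (0:Fin 4)) ↔ False by decide,
    show ((2:Fin 4) < (0:Fin 4)) ↔ False by decide,
    show ((0:Fin 4) < (1:Fin 4)) ↔ True by decide,
    show ((1:Fin 4) < (1:Fin 4)) ↔ False by decide,
    show ((2:Fin 4) < (1:Fin 4)) ↔ False by decide,
    show ((0:Fin 4) < (2:Fin 4)) ↔ True by decide,
    show ((1:Fin 4) < (2:Fin 4)) ↔ True by decide,
    show ((2:Fin 4) < (2:Fin 4)) ↔ False by decide,
    show ((0:Fin 4) < (3:Fin 4)) ↔ True by decide,
    show ((1:Fin 4) < (3:Fin 4)) ↔ True by decide,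
    show ((2:Fin 4) < (3:Fin 4)) ↔ True by decide,
    if_true, if_false,
    show Fin.succ (0 : Fin 3) = (1 : Fin 4) by decide,
    show Fin.succ (1 : Fin 3) = (2 : Fin 4) by decide,
    show Fin.succ (2 : Fin 3) = (3 : Fin 4) by decide,
    show Fin.castSucc (0 : Fin 3) = (0 : Fin 4) by decide,
    show Fin.castSucc (1 : Fin 3) = (1 : Fin 4) by decide,
    show Fin.castSucc (2 : Fin 3) = (2 : Fin 4) by decide,
    show ((0 : Fin 3) : ℕ) = 0 from rfl, show ((1 : Fin 3) : ℕ) = 1 from rfl,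
    show ((2 : Fin 3) : ℕ) = 2 from rfl,
    show ((0 : Fin 4) : ℕ) = 0 from rfl, show ((1 : Fin 4) : ℕ) = 1 from rfl,
    show ((2 : Fin 4) : ℕ) = 2 from rfl, show ((3 : Fin 4) : ℕ) = 3 from rfl,
    pow_zero, pow_one] at h0 h1 h2 h3
  refine ⟨?_, ?_, ?_, ?_⟩
  · rw [h0]; ring
  · rw [h1]; ring
  · rw [h2]; ring
  · rw [h3]; ring

/-- digits bound -/
lemma ruzsa_digits_lt {d : ℕ} (hd : 0 < d) : ∀ (n : ℕ) (x : Fin n → ℕ),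
    (∀ j, x j < d) → (∑ j, x j * d ^ (j : ℕ)) < d ^ n := by
  intro n
  induction n with
  | zero => intro x _; simp
  | succ n ih =>
    intro x hx
    rw [Fin.sum_univ_succ]
    have hre : ∑ j : Fin n, x j.succ * d ^ ((j.succ : Fin (n+1)) : ℕ)
        = d * ∑ j : Fin n, x j.succ * d ^ (j : ℕ) := by
      rw [Finset.mul_sum]
      refine Finset.sum_congr rfl fun j _ => ?_
      rw [Fin.val_succ, pow_succ]
      ring
    rw [hre]
    have h1 : ∑ j : Fin n, x j.succ * d ^ (j : ℕ) < d ^ n := ih _ (fun j => hx j.succ)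
    have h2 : x 0 < d := hx 0
    have h3 : d * ((∑ j : Fin n, x j.succ * d ^ (j : ℕ)) + 1) ≤ d * d ^ n :=
      Nat.mul_le_mul_left d (by omega)
    rw [Nat.mul_succ] at h3
    simp only [Fin.val_zero, pow_zero, mul_one, pow_succ]
    rw [mul_comm (d ^ n) d]
    omega


set_option maxHeartbeats 16000000 in
theorem ruzsa_type_set_exists
    (a : Fin 5 → ℤ) (ha : StrictMono a)
    (v vt : Fin 4 → ℤ)
    (hv : ∀ i : Fin 4, v i = (-1) ^ ((i : ℕ) + 1) *
      (Matrix.of fun (j k : Fin 3) =>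
        (fun j' : Fin 4 => a j'.castSucc) (i.succAbove j) ^ (k : ℕ)).det)
    (hvt : ∀ i : Fin 4, vt i = (-1) ^ ((i : ℕ) + 1) *
      (Matrix.of fun (j k : Fin 3) =>
        (fun j' : Fin 4 => a j'.succ) (i.succAbove j) ^ (k : ℕ)).det) :
    ∀ ε : ℝ, 0 < ε → ∃ L₀ : ℕ, ∀ L : ℕ, L₀ ≤ L →
      ∃ Λ : Finset ℕ, (∀ x ∈ Λ, x < L) ∧ (Λ.card : ℝ) > (L : ℝ) ^ (1 - ε) ∧
        ∀ b : Fin 5 → ℕ, (∀ i, b i ∈ Λ) →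
          (∑ i : Fin 4, v i * (b i.castSucc : ℤ)) = 0 →
          (∑ i : Fin 4, vt i * (b i.succ : ℤ)) = 0 →
          ∀ i j, b i = b j := by
  intro ε hε
  set e : ℝ := min ε (1/2) with he_def
  have he : 0 < e := lt_min hε (by norm_num)
  have he2 : e ≤ 1/2 := min_le_right _ _
  have heε : e ≤ ε := min_le_left _ _
  -- parameters
  set M : ℕ := (∑ i, (v i).natAbs) + (∑ i, (vt i).natAbs) with hM_def
  set B : ℕ := 2 * M + 2 with hB_def
  have hB2 : 2 ≤ B := by omega
  set s : ℕ := ⌈(3:ℝ)/e⌉₊ with hs_def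
  have hs_ceil : (3:ℝ)/e ≤ s := Nat.le_ceil _
  have hs6 : 6 ≤ s := by
    have h6 : (6:ℝ) ≤ 3/e := by
      rw [le_div_iff₀ he]; linarith
    have : (6:ℝ) ≤ (s:ℝ) := le_trans h6 hs_ceil
    exact_mod_cast this
  have hse : 3 ≤ e * s := by
    rw [div_le_iff₀ he] at hs_ceil
    linarith
  set m : ℕ := B ^ s with hm_def
  set d : ℕ := B ^ (s+1) with hd_def
  have hm1 : 1 ≤ m := Nat.one_le_pow _ _ (by omega)
  have hd2 : 2 ≤ d := le_trans hB2 (Nat.le_self_pow (by omega) _)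
  have hdm : d = B * m := by rw [hd_def, hm_def, pow_succ, mul_comm]
  have hmd : m ≤ d := by rw [hdm]; nlinarith
  refine ⟨d ^ (3*s+1), fun L hL => ?_⟩
  have hL0 : L ≠ 0 := by
    have : 0 < d ^ (3*s+1) := pow_pos (by omega) _
    omega
  set n : ℕ := Nat.log d L with hn_def
  have hn : 3*s+1 ≤ n := (Nat.le_log_iff_pow_le (by omega) hL0).mpr hL
  have hdn : d ^ n ≤ L := Nat.pow_log_le_self d hL0
  have hdn1 : L < d ^ (n+1) := Nat.lt_pow_succ_log_self (by omega) L
  -- digit space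
  set D : Finset (Fin n → ℕ) := Fintype.piFinset (fun _ => Finset.range m) with hD_def
  set g : (Fin n → ℕ) → ℕ := fun x => ∑ j, x j * d ^ (j:ℕ) with hg_def
  set f : (Fin n → ℕ) → ℕ := fun x => ∑ j, (x j)^2 with hf_def
  have hDmem : ∀ x ∈ D, ∀ j, x j < m := by
    intro x hx j
    rw [hD_def, Fintype.mem_piFinset] at hx
    simpa using hx j
  have hgD : ∀ x ∈ D, g x < d ^ n :=
    fun x hx => ruzsa_digits_lt (by omega) n x (fun j => lt_of_lt_of_le (hDmem x hx j) hmd)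
  have hginj : Set.InjOn g D := by
    intro x hx y hy hxy
    have h0 : ∀ j : Fin n, ((x j : ℤ) - (y j : ℤ)) = 0 := by
      apply ruzsa_digits_zero (d := (d:ℤ)) n
      · intro j
        have hxj := hDmem x hx j
        have hyj := hDmem y hy j
        have : |(x j : ℤ) - (y j : ℤ)| < m := by
          rw [abs_lt]
          constructor <;> [skip; skip] <;> push_cast <;> omega
        have hBm : 2 * (m:ℤ) ≤ (d:ℤ) := by
          rw [hdm]; push_cast; nlinarith [hB2]
        linarith
      · have hgc : (g x : ℤ) = (g y : ℤ) := by rw [hxy]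
        rw [hg_def] at hgc
        push_cast at hgc
        simp only [sub_mul]
        rw [Finset.sum_sub_distrib, hgc, sub_self]
    funext j
    have := h0 j
    omega
  -- pigeonhole
  set T : Finset ℕ := Finset.range (n * m^2 + 1) with hT_def
  have hmap : ∀ x ∈ D, f x ∈ T := by
    intro x hx
    rw [hT_def, Finset.mem_range]
    have : f x ≤ n * m^2 := by
      rw [hf_def]
      calc ∑ j : Fin n, (x j)^2 ≤ ∑ _j : Fin n, m^2 := by
            refine Finset.sum_le_sum fun j _ => ?_
            have := hDmem x hx j
            nlinarith
        _ = n * m^2 := by simp [Finset.sum_const, Finset.card_univ]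
    omega
  have hcardD : D.card = m ^ n := by
    rw [hD_def]
    simp
  have hnm : n + 2*s ≤ s * n := by nlinarith
  set E : ℕ := s * n - (n + 2*s) with hE_def
  have hE : n + 2*s + E = s * n := by omega
  have hcount : T.card * B ^ E ≤ D.card := by
    rw [hcardD, hT_def, Finset.card_range, hm_def, ← pow_mul, ← pow_mul, mul_comm s 2, mul_comm s n]
    have h1 : n * B^(2*s) + 1 ≤ B ^ (n + 2*s) := by
      have h2 : n + 1 ≤ 2 ^ n := Nat.lt_two_pow_self
      have h3 : 2 ^ n ≤ B ^ n := Nat.pow_le_pow_left hB2 n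
      calc n * B^(2*s) + 1 ≤ (n+1) * B^(2*s) := by nlinarith [Nat.one_le_pow (2*s) B (show 0 < B by omega)]
        _ ≤ B ^ n * B ^ (2*s) := Nat.mul_le_mul_right _ (le_trans h2 h3)
        _ = B ^ (n + 2*s) := by rw [← pow_add]
    calc (n * B^(2*s) + 1) * B ^ E ≤ B ^ (n+2*s) * B ^ E := Nat.mul_le_mul_right _ h1
      _ = B ^ (n + 2*s + E) := by rw [← pow_add]
      _ = B ^ (n * s) := by rw [hE, Nat.mul_comm s n]
  obtain ⟨R, _hRT, hRcard⟩ :=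
    Finset.exists_le_card_fiber_of_mul_le_card_of_maps_to hmap ⟨0, by rw [hT_def]; simp⟩ hcount
  set Λ : Finset ℕ := (D.filter fun x => f x = R).image g with hΛ_def
  have hΛcard : B ^ E ≤ Λ.card := by
    rw [hΛ_def, Finset.card_image_of_injOn (hginj.mono (by intro x hx; exact Finset.mem_filter.mp hx |>.1))]
    exact hRcard
  refine ⟨Λ, ?_, ?_, ?_⟩
  · intro x hx
    rw [hΛ_def, Finset.mem_image] at hx
    obtain ⟨y, hy, rfl⟩ := hx
    exact lt_of_lt_of_le (hgD y (Finset.mem_filter.mp hy).1) hdn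
  · -- size estimate
    have hL1 : (1:ℝ) ≤ (L:ℝ) := by exact_mod_cast Nat.one_le_iff_ne_zero.mpr hL0
    have hBr : (1:ℝ) ≤ (B:ℝ) := by exact_mod_cast (by omega : 1 ≤ B)
    have step1 : (L:ℝ) ^ (1-ε) ≤ (L:ℝ) ^ (1-e) :=
      Real.rpow_le_rpow_of_exponent_le hL1 (by linarith)
    have step2 : (L:ℝ) ^ (1-e) < ((d:ℝ) ^ (n+1)) ^ (1-e) := by
      apply Real.rpow_lt_rpow (by positivity) _ (by linarith)
      exact_mod_cast hdn1
    have hdB : ((d:ℝ)) ^ (n+1) = (B:ℝ) ^ ((s+1)*(n+1)) := by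
      rw [hd_def]
      push_cast
      rw [← pow_mul]
    have hBr0 : (0:ℝ) ≤ (B:ℝ) := by positivity
    have step3 : ((d:ℝ) ^ (n+1)) ^ (1-e) = (B:ℝ) ^ (((((s+1)*(n+1) : ℕ)):ℝ) * (1-e)) := by
      rw [hdB, ← Real.rpow_natCast (B:ℝ) ((s+1)*(n+1)), ← Real.rpow_mul hBr0]
    have hncast : (3:ℝ) * s + 1 ≤ (n:ℝ) := by exact_mod_cast hn
    have hEr : (E:ℝ) = (s:ℝ) * (n:ℝ) - (n:ℝ) - 2*(s:ℝ) := by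
      have : ((n + 2*s + E : ℕ) : ℝ) = ((s * n : ℕ) : ℝ) := by rw [hE]
      push_cast at this
      linarith
    have key : 3*(n:ℝ) ≤ e * (((s:ℝ)+1) * ((n:ℝ)+1)) := by
      have k1 : 3 * (n:ℝ) ≤ e * (s:ℝ) * (n:ℝ) :=
        mul_le_mul_of_nonneg_right hse (Nat.cast_nonneg n)
      nlinarith [mul_nonneg he.le (show (0:ℝ) ≤ (s:ℝ) + (n:ℝ) + 1 by positivity)]
    have hexp : ((((s+1)*(n+1) : ℕ)):ℝ) * (1-e) ≤ ((E:ℕ):ℝ) := by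
      push_cast
      rw [hEr]
      nlinarith [key, hncast]
    have step4 : (B:ℝ) ^ (((((s+1)*(n+1) : ℕ)):ℝ) * (1-e)) ≤ (B:ℝ) ^ ((E:ℕ):ℝ) :=
      Real.rpow_le_rpow_of_exponent_le hBr hexp
    have step5 : (B:ℝ) ^ ((E:ℕ):ℝ) = ((B^E : ℕ):ℝ) := by
      rw [Real.rpow_natCast]
      push_cast
      ring
    have step6 : ((B^E : ℕ):ℝ) ≤ (Λ.card : ℝ) := by exact_mod_cast hΛcard
    calc (L:ℝ) ^ (1-ε) ≤ (L:ℝ) ^ (1-e) := step1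
      _ < ((d:ℝ) ^ (n+1)) ^ (1-e) := step2
      _ = (B:ℝ) ^ (((((s+1)*(n+1) : ℕ)):ℝ) * (1-e)) := step3
      _ ≤ (B:ℝ) ^ ((E:ℕ):ℝ) := step4
      _ = ((B^E : ℕ):ℝ) := step5
      _ ≤ (Λ.card : ℝ) := step6
  · -- the independence property
    obtain ⟨hv0, hv1, hv2, hv3⟩ := ruzsa_minor_explicit (fun j' : Fin 4 => a j'.castSucc) v hv
    obtain ⟨ht0, ht1, ht2, ht3⟩ := ruzsa_minor_explicit (fun j' : Fin 4 => a j'.succ) vt hvt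
    simp only [show Fin.castSucc (0:Fin 4) = (0:Fin 5) by decide,
      show Fin.castSucc (1:Fin 4) = (1:Fin 5) by decide,
      show Fin.castSucc (2:Fin 4) = (2:Fin 5) by decide,
      show Fin.castSucc (3:Fin 4) = (3:Fin 5) by decide] at hv0 hv1 hv2 hv3
    simp only [show Fin.succ (0:Fin 4) = (1:Fin 5) by decide,
      show Fin.succ (1:Fin 4) = (2:Fin 5) by decide,
      show Fin.succ (2:Fin 4) = (3:Fin 5) by decide,
      show Fin.succ (3:Fin 4) = (4:Fin 5) by decide] at ht0 ht1 ht2 ht3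
    intro b hb heq1 heq2
    -- digit vectors
    have hbex : ∀ i, ∃ x, x ∈ D ∧ f x = R ∧ g x = b i := by
      intro i
      have hmem := hb i
      rw [hΛ_def, Finset.mem_image] at hmem
      obtain ⟨x, hx, hgx⟩ := hmem
      rw [Finset.mem_filter] at hx
      exact ⟨x, hx.1, hx.2, hgx⟩
    choose y hyD hyf hyg using hbex
    -- bound for digit coefficients
    have hboundgen : ∀ (u : Fin 4 → ℤ) (z : Fin 4 → ℕ), (∀ i, z i < m) →
        (∑ i : Fin 4, (u i).natAbs ≤ M) → 2 * |∑ i : Fin 4, u i * (z i : ℤ)| < (d:ℤ) := by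
      intro u z hz hu
      have habs : |∑ i : Fin 4, u i * (z i : ℤ)| ≤ (M:ℤ) * ((m:ℤ) - 1) := by
        calc |∑ i : Fin 4, u i * (z i : ℤ)| ≤ ∑ i : Fin 4, |u i * (z i : ℤ)| :=
              Finset.abs_sum_le_sum_abs _ _
          _ ≤ ∑ i : Fin 4, ((u i).natAbs : ℤ) * ((m:ℤ) - 1) := by
              refine Finset.sum_le_sum fun i _ => ?_
              rw [abs_mul, Int.abs_eq_natAbs]
              have h1 : (z i : ℤ) ≤ (m:ℤ) - 1 := by
                have := hz i
                omega
              have h2 : |(z i : ℤ)| = (z i : ℤ) := abs_of_nonneg (by positivity)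
              rw [h2]
              exact mul_le_mul_of_nonneg_left h1 (by positivity)
          _ = ((∑ i : Fin 4, (u i).natAbs : ℕ) : ℤ) * ((m:ℤ) - 1) := by
              push_cast
              rw [Finset.sum_mul]
          _ ≤ (M:ℤ) * ((m:ℤ) - 1) := by
              have h3 : ((∑ i : Fin 4, (u i).natAbs : ℕ) : ℤ) ≤ (M:ℤ) := by exact_mod_cast hu
              have h4 : (1:ℤ) ≤ (m:ℤ) := by exact_mod_cast hm1
              nlinarith
      have hd' : 2 * ((M:ℤ) * ((m:ℤ) - 1)) < (d:ℤ) := by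
        have hdmz : (d:ℤ) = ((B:ℕ):ℤ) * (m:ℤ) := by exact_mod_cast hdm
        have hBz : ((B:ℕ):ℤ) = 2 * (M:ℤ) + 2 := by rw [hB_def]; push_cast; ring
        have h4 : (1:ℤ) ≤ (m:ℤ) := by exact_mod_cast hm1
        have h5 : (0:ℤ) ≤ (M:ℤ) := by positivity
        rw [hdmz, hBz]
        nlinarith
      linarith
    have huM1 : ∑ i : Fin 4, (v i).natAbs ≤ M := by rw [hM_def]; exact Nat.le_add_right _ _
    have huM2 : ∑ i : Fin 4, (vt i).natAbs ≤ M := by rw [hM_def]; exact Nat.le_add_left _ _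
    have hcoef1 : ∀ j : Fin n, (∑ i : Fin 4, v i * (y i.castSucc j : ℤ)) = 0 := by
      apply ruzsa_digits_zero (d := (d:ℤ)) n
      · exact fun j => hboundgen v (fun i => y i.castSucc j)
          (fun i => hDmem _ (hyD i.castSucc) j) huM1
      · have hbg : ∀ i : Fin 4, (b i.castSucc : ℤ) = ∑ j : Fin n, (y i.castSucc j : ℤ) * (d:ℤ)^(j:ℕ) := by
          intro i
          rw [← hyg i.castSucc, hg_def]
          push_cast
          rfl
        calc ∑ j : Fin n, (∑ i : Fin 4, v i * (y i.castSucc j : ℤ)) * (d:ℤ)^(j:ℕ)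
            = ∑ i : Fin 4, v i * (b i.castSucc : ℤ) := by
              simp only [Finset.sum_mul]
              rw [Finset.sum_comm]
              refine Finset.sum_congr rfl fun i _ => ?_
              rw [hbg i, Finset.mul_sum]
              exact Finset.sum_congr rfl fun j _ => by ring
          _ = 0 := heq1
    have hcoef2 : ∀ j : Fin n, (∑ i : Fin 4, vt i * (y i.succ j : ℤ)) = 0 := by
      apply ruzsa_digits_zero (d := (d:ℤ)) n
      · exact fun j => hboundgen vt (fun i => y i.succ j)
          (fun i => hDmem _ (hyD i.succ) j) huM2
      · have hbg : ∀ i : Fin 4, (b i.succ : ℤ) = ∑ j : Fin n, (y i.succ j : ℤ) * (d:ℤ)^(j:ℕ) := by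
          intro i
          rw [← hyg i.succ, hg_def]
          push_cast
          rfl
        calc ∑ j : Fin n, (∑ i : Fin 4, vt i * (y i.succ j : ℤ)) * (d:ℤ)^(j:ℕ)
            = ∑ i : Fin 4, vt i * (b i.succ : ℤ) := by
              simp only [Finset.sum_mul]
              rw [Finset.sum_comm]
              refine Finset.sum_congr rfl fun i _ => ?_
              rw [hbg i, Finset.mul_sum]
              exact Finset.sum_congr rfl fun j _ => by ring
          _ = 0 := heq2
    -- rational setting
    set A : Fin 5 → ℚ := fun i => ((a i : ℤ) : ℚ) with hA_def
    have hAinj : Function.Injective A := by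
      intro x x' hxx
      apply ha.injective
      rw [hA_def] at hxx
      have hxx' : ((a x : ℤ) : ℚ) = ((a x' : ℤ) : ℚ) := hxx
      exact_mod_cast hxx'
    have hv3pos : (0:ℤ) < v 3 := by
      rw [hv3]
      have h01 : a 0 < a 1 := ha (by decide)
      have h02 : a 0 < a 2 := ha (by decide)
      have h12 : a 1 < a 2 := ha (by decide)
      exact mul_pos (mul_pos (by linarith) (by linarith)) (by linarith)
    have ht3pos : (0:ℤ) < vt 3 := by
      rw [ht3]
      have h01 : a 1 < a 2 := ha (by decide)
      have h02 : a 1 < a 3 := ha (by decide)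
      have h12 : a 2 < a 3 := ha (by decide)
      exact mul_pos (mul_pos (by linarith) (by linarith)) (by linarith)
    have hv3q : ((v 3 : ℤ) : ℚ) ≠ 0 := by
      have : (v 3 : ℤ) ≠ 0 := ne_of_gt hv3pos
      exact_mod_cast this
    have ht3q : ((vt 3 : ℤ) : ℚ) ≠ 0 := by
      have : (vt 3 : ℤ) ≠ 0 := ne_of_gt ht3pos
      exact_mod_cast this
    -- quadratic identities
    have hqid1 : ∀ x0 x1 x2 : ℚ,
        (v 0 : ℚ) * (x0 + x1 * A 0 + x2 * A 0^2) + (v 1 : ℚ) * (x0 + x1 * A 1 + x2 * A 1^2)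
        + (v 2 : ℚ) * (x0 + x1 * A 2 + x2 * A 2^2) + (v 3 : ℚ) * (x0 + x1 * A 3 + x2 * A 3^2) = 0 := by
      intro x0 x1 x2
      have c0 : ((v 0 : ℤ) : ℚ) = -((A 2 - A 1) * (A 3 - A 1) * (A 3 - A 2)) := by
        rw [hv0, hA_def]; push_cast; ring
      have c1 : ((v 1 : ℤ) : ℚ) = (A 2 - A 0) * (A 3 - A 0) * (A 3 - A 2) := by
        rw [hv1, hA_def]; push_cast; ring
      have c2 : ((v 2 : ℤ) : ℚ) = -((A 1 - A 0) * (A 3 - A 0) * (A 3 - A 1)) := by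
        rw [hv2, hA_def]; push_cast; ring
      have c3 : ((v 3 : ℤ) : ℚ) = (A 1 - A 0) * (A 2 - A 0) * (A 2 - A 1) := by
        rw [hv3, hA_def]; push_cast; ring
      rw [c0, c1, c2, c3]
      ring
    have hqid2 : ∀ x0 x1 x2 : ℚ,
        (vt 0 : ℚ) * (x0 + x1 * A 1 + x2 * A 1^2) + (vt 1 : ℚ) * (x0 + x1 * A 2 + x2 * A 2^2)
        + (vt 2 : ℚ) * (x0 + x1 * A 3 + x2 * A 3^2) + (vt 3 : ℚ) * (x0 + x1 * A 4 + x2 * A 4^2) = 0 := by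
      intro x0 x1 x2
      have c0 : ((vt 0 : ℤ) : ℚ) = -((A 3 - A 2) * (A 4 - A 2) * (A 4 - A 3)) := by
        rw [ht0, hA_def]; push_cast; ring
      have c1 : ((vt 1 : ℤ) : ℚ) = (A 3 - A 1) * (A 4 - A 1) * (A 4 - A 3) := by
        rw [ht1, hA_def]; push_cast; ring
      have c2 : ((vt 2 : ℤ) : ℚ) = -((A 2 - A 1) * (A 4 - A 1) * (A 4 - A 2)) := by
        rw [ht2, hA_def]; push_cast; ring
      have c3 : ((vt 3 : ℤ) : ℚ) = (A 2 - A 1) * (A 3 - A 1) * (A 3 - A 2) := by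
        rw [ht3, hA_def]; push_cast; ring
      rw [c0, c1, c2, c3]
      ring
    -- per-digit quadratic structure
    have hquad : ∀ j : Fin n, ∃ c : Fin 3 → ℚ,
        ∀ i : Fin 5, (y i j : ℚ) = c 0 + c 1 * A i + c 2 * (A i)^2 := by
      intro j
      have h35 : (3:ℕ) ≤ 5 := by omega
      have hinj3 : Function.Injective (fun t : Fin 3 => A (Fin.castLE h35 t)) :=
        fun t t' htt => Fin.castLE_injective _ (hAinj htt)
      obtain ⟨c, hc⟩ := ruzsa_vdm_surj (fun t : Fin 3 => A (Fin.castLE h35 t)) hinj3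
        (fun t : Fin 3 => ((y (Fin.castLE h35 t) j : ℕ) : ℚ))
      have hc' : ∀ t : Fin 3, ((y (Fin.castLE h35 t) j : ℕ) : ℚ)
          = c 0 + c 1 * A (Fin.castLE h35 t) + c 2 * (A (Fin.castLE h35 t))^2 := by
        intro t
        have := hc t
        rw [Fin.sum_univ_three] at this
        simp only [show ((0 : Fin 3) : ℕ) = 0 from rfl, show ((1 : Fin 3) : ℕ) = 1 from rfl,
          show ((2 : Fin 3) : ℕ) = 2 from rfl, pow_zero, pow_one, one_mul] at this
        rw [← this]
        ring
      have w0 : ((y 0 j : ℕ) : ℚ) = c 0 + c 1 * A 0 + c 2 * (A 0)^2 := by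
        have := hc' 0
        simpa only [show Fin.castLE h35 (0 : Fin 3) = (0 : Fin 5) from rfl] using this
      have w1 : ((y 1 j : ℕ) : ℚ) = c 0 + c 1 * A 1 + c 2 * (A 1)^2 := by
        have := hc' 1
        simpa only [show Fin.castLE h35 (1 : Fin 3) = (1 : Fin 5) from rfl] using this
      have w2 : ((y 2 j : ℕ) : ℚ) = c 0 + c 1 * A 2 + c 2 * (A 2)^2 := by
        have := hc' 2
        simpa only [show Fin.castLE h35 (2 : Fin 3) = (2 : Fin 5) from rfl] using this
      -- linear relations in ℚ
      have ec1 : (v 0 : ℚ) * ((y 0 j : ℕ) : ℚ) + (v 1 : ℚ) * ((y 1 j : ℕ) : ℚ)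
          + (v 2 : ℚ) * ((y 2 j : ℕ) : ℚ) + (v 3 : ℚ) * ((y 3 j : ℕ) : ℚ) = 0 := by
        have hz := hcoef1 j
        rw [Fin.sum_univ_four] at hz
        simp only [show Fin.castSucc (0:Fin 4) = (0:Fin 5) by decide,
          show Fin.castSucc (1:Fin 4) = (1:Fin 5) by decide,
          show Fin.castSucc (2:Fin 4) = (2:Fin 5) by decide,
          show Fin.castSucc (3:Fin 4) = (3:Fin 5) by decide] at hz
        have : (((v 0 * (y 0 j : ℤ) + v 1 * (y 1 j : ℤ) + v 2 * (y 2 j : ℤ) + v 3 * (y 3 j : ℤ)) : ℤ) : ℚ) = 0 := by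
          rw [hz]; norm_num
        push_cast at this
        linarith
      have ec2 : (vt 0 : ℚ) * ((y 1 j : ℕ) : ℚ) + (vt 1 : ℚ) * ((y 2 j : ℕ) : ℚ)
          + (vt 2 : ℚ) * ((y 3 j : ℕ) : ℚ) + (vt 3 : ℚ) * ((y 4 j : ℕ) : ℚ) = 0 := by
        have hz := hcoef2 j
        rw [Fin.sum_univ_four] at hz
        simp only [show Fin.succ (0:Fin 4) = (1:Fin 5) by decide,
          show Fin.succ (1:Fin 4) = (2:Fin 5) by decide,
          show Fin.succ (2:Fin 4) = (3:Fin 5) by decide,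
          show Fin.succ (3:Fin 4) = (4:Fin 5) by decide] at hz
        have : (((vt 0 * (y 1 j : ℤ) + vt 1 * (y 2 j : ℤ) + vt 2 * (y 3 j : ℤ) + vt 3 * (y 4 j : ℤ)) : ℤ) : ℚ) = 0 := by
          rw [hz]; norm_num
        push_cast at this
        linarith
      have w3 : ((y 3 j : ℕ) : ℚ) = c 0 + c 1 * A 3 + c 2 * (A 3)^2 := by
        apply mul_left_cancel₀ hv3q
        have hid := hqid1 (c 0) (c 1) (c 2)
        rw [w0, w1, w2] at ec1
        linarith
      have w4 : ((y 4 j : ℕ) : ℚ) = c 0 + c 1 * A 4 + c 2 * (A 4)^2 := by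
        apply mul_left_cancel₀ ht3q
        have hid := hqid2 (c 0) (c 1) (c 2)
        rw [w1, w2, w3] at ec2
        linarith
      refine ⟨c, fun i => ?_⟩
      fin_cases i
      · exact w0
      · exact w1
      · exact w2
      · exact w3
      · exact w4
    choose C hC using hquad
    -- sphere condition
    have hsph : ∀ i : Fin 5, ∑ j : Fin n, ((y i j : ℕ) : ℚ)^2 = (R : ℚ) := by
      intro i
      have := hyf i
      rw [hf_def] at this
      have : ((∑ j : Fin n, (y i j)^2 : ℕ) : ℚ) = (R : ℚ) := by exact_mod_cast this
      push_cast at this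
      exact this
    -- the quartic polynomial coefficients
    set k0 : ℚ := (∑ j : Fin n, (C j 0)^2) - (R:ℚ) with hk0
    set k1 : ℚ := ∑ j : Fin n, 2 * C j 0 * C j 1 with hk1
    set k2 : ℚ := ∑ j : Fin n, ((C j 1)^2 + 2 * C j 0 * C j 2) with hk2
    set k3 : ℚ := ∑ j : Fin n, 2 * C j 1 * C j 2 with hk3
    set k4 : ℚ := ∑ j : Fin n, (C j 2)^2 with hk4
    have hexpand : ∀ i : Fin 5, ∑ j : Fin n, ((y i j : ℕ) : ℚ)^2
        = (∑ j : Fin n, (C j 0)^2) + A i * k1 + A i^2 * k2 + A i^3 * k3 + A i^4 * k4 := by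
      intro i
      rw [hk1, hk2, hk3, hk4]
      simp only [Finset.mul_sum]
      rw [← Finset.sum_add_distrib, ← Finset.sum_add_distrib, ← Finset.sum_add_distrib,
        ← Finset.sum_add_distrib]
      refine Finset.sum_congr rfl fun j _ => ?_
      rw [hC j i]
      ring
    have hroot : ∀ i : Fin 5, ∑ t : Fin 5, A i ^ (t : ℕ) * (![k0, k1, k2, k3, k4]) t = 0 := by
      intro i
      rw [Fin.sum_univ_five]
      simp only [Matrix.cons_val_zero, Matrix.cons_val_one, Matrix.head_cons,
        Matrix.cons_val_two, Matrix.tail_cons, Matrix.cons_val_three, Matrix.cons_val_four,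
        show ((0 : Fin 5) : ℕ) = 0 from rfl, show ((1 : Fin 5) : ℕ) = 1 from rfl,
        show ((2 : Fin 5) : ℕ) = 2 from rfl, show ((3 : Fin 5) : ℕ) = 3 from rfl,
        show ((4 : Fin 5) : ℕ) = 4 from rfl, pow_zero, pow_one, one_mul]
      have h1 := hexpand i
      have h2 := hsph i
      rw [hk0]
      linarith
    have hkzero := ruzsa_vdm_inj A hAinj _ hroot
    have hk4z : k4 = 0 := by
      have := hkzero 4
      simpa using this
    have hC2 : ∀ j : Fin n, C j 2 = 0 := by
      intro j
      have hsumz : ∑ j : Fin n, (C j 2)^2 = 0 := by rw [← hk4, hk4z]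
      have := (Finset.sum_eq_zero_iff_of_nonneg (fun j _ => sq_nonneg (C j 2))).mp hsumz j
        (Finset.mem_univ j)
      exact pow_eq_zero_iff (by norm_num) |>.mp this
    have hk2z : k2 = 0 := by
      have := hkzero 2
      simpa using this
    have hC1 : ∀ j : Fin n, C j 1 = 0 := by
      intro j
      have hsumz : ∑ j : Fin n, (C j 1)^2 = 0 := by
        rw [← hk2z, hk2]
        refine Finset.sum_congr rfl fun j _ => ?_
        rw [hC2 j]
        ring
      have := (Finset.sum_eq_zero_iff_of_nonneg (fun j _ => sq_nonneg (C j 1))).mp hsumz j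
        (Finset.mem_univ j)
      exact pow_eq_zero_iff (by norm_num) |>.mp this
    have hyconst : ∀ (i i' : Fin 5) (j : Fin n), y i j = y i' j := by
      intro i i' j
      have h1 := hC j i
      have h2 := hC j i'
      rw [hC1 j, hC2 j] at h1 h2
      simp only [zero_mul, add_zero] at h1 h2
      have : ((y i j : ℕ) : ℚ) = ((y i' j : ℕ) : ℚ) := by rw [h1, h2]
      exact_mod_cast this
    intro i i'
    rw [← hyg i, ← hyg i']
    congr 1
    funext j
    exact hyconst i i' j
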